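/- If X is a nonempty topological space in which no point has a compact neighborhood, then the one-point compactification X⁺ = X ∪ {∞} is not semi-Hausdorff; indeed, the only regular open subset of X⁺ containing ∞ is X⁺ itself. -/
import Mathlib


/-- The one-point compactification of a nonempty nowhere locally compact space is
not semi-Hausdorff; indeed, the only regular open subset of `X⁺` containing `∞`
is `X⁺` itself. -/
theorem onePoint_of_nowhereLocallyCompact_not_semiHausdorff {X : Type*}
    [TopologicalSpace X] [Nonempty X]
    (hnlc : ∀ (x : X) (K : Set X), K ∈ nhds x → ¬ IsCompact K) :
    (∀ U : Set (OnePoint X), IsOpen U → U = interior (closure U) →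
      OnePoint.infty ∈ U → U = Set.univ) ∧
    ¬ ∀ x y : OnePoint X, x ≠ y →
      ∃ U : Set (OnePoint X), IsOpen U ∧ U = interior (closure U) ∧
        x ∈ U ∧ y ∉ U := by
  have h1 : ∀ U : Set (OnePoint X), IsOpen U → U = interior (closure U) →
      OnePoint.infty ∈ U → U = Set.univ := by
    intro U hU hreg hinf
    have hC : IsCompact ((↑) ⁻¹' U : Set X)ᶜ :=
      ((OnePoint.isOpen_iff_of_mem' hinf).mp hU).1
    have hcl : closure U = Set.univ := by
      apply Set.eq_univ_of_forall
      intro z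
      by_contra hz
      induction z using OnePoint.rec with
      | infty => exact hz (subset_closure hinf)
      | coe x =>
        set V : Set X := (↑) ⁻¹' (closure U)ᶜ with hV
        have hVopen : IsOpen V :=
          (isClosed_closure.isOpen_compl).preimage OnePoint.continuous_coe
        have hxV : x ∈ V := hz
        have hVsub : V ⊆ ((↑) ⁻¹' U : Set X)ᶜ := fun y hy hyU =>
          hy (subset_closure hyU)
        exact hnlc x _ (Filter.mem_of_superset (hVopen.mem_nhds hxV) hVsub) hC
    rw [hreg, hcl, interior_univ]
  refine ⟨h1, fun h => ?_⟩
  obtain ⟨x⟩ := ‹Nonempty X›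
  obtain ⟨U, hU, hreg, hmem, hnot⟩ := h OnePoint.infty x (OnePoint.infty_ne_coe x)
  exact hnot ((h1 U hU hreg hmem) ▸ Set.mem_univ _)
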